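/- Let G be an invertible p×p real matrix with rows v₁, …, v_p, let η_j = v_j − P_j(v_j) be the component of v_j orthogonal to the span of the other rows, let R be a p×p orthogonal matrix, let l > 0 and ρ ≥ 0, and let δ ∈ ℝ^p with ‖δ‖ ≤ ρ. If f = (f₁, …, f_p) ∈ ℤ^p and there exists j with |f_j| > l√p/(2‖η_j‖) + ρ/‖η_j‖, then Rᵀ Gᵀ f + δ ∉ [−l/2, l/2]^p. -/

import Mathlib

open Matrix

/-- Theorem 2 of He (2017): if `|f j| > l√p/(2‖η j‖) + ρ/‖η j‖` for some `j`, then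
`Rᵀ Gᵀ f + δ` lies outside the cube `[-l/2, l/2]^p` whenever `‖δ‖ ≤ ρ`. -/
theorem lattice_point_outside_cube
    (p : ℕ) (G R : Matrix (Fin p) (Fin p) ℝ) (hG : IsUnit G.det) (hR : Rᵀ * R = 1)
    (v : Fin p → EuclideanSpace ℝ (Fin p)) (hv : ∀ j k, v j k = G j k)
    (η : Fin p → EuclideanSpace ℝ (Fin p))
    (hη : ∀ j, η j = v j -
      (Submodule.orthogonalProjectionOnto (Submodule.span ℝ (v '' {k | k ≠ j})) (v j) : EuclideanSpace ℝ (Fin p)))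
    (l ρ : ℝ) (hl : 0 < l) (hρ : 0 ≤ ρ)
    (δ : EuclideanSpace ℝ (Fin p)) (hδ : ‖δ‖ ≤ ρ)
    (f : Fin p → ℤ) (j : Fin p)
    (hf : l * Real.sqrt p / (2 * ‖η j‖) + ρ / ‖η j‖ < (|f j| : ℝ)) :
    ¬ ∀ k, (Rᵀ * Gᵀ).mulVec (fun i => (f i : ℝ)) k + δ k ∈ Set.Icc (-(l / 2)) (l / 2) := by
  intro hall
  set K := Submodule.span ℝ (v '' {k | k ≠ j}) with hK
  -- η j is orthogonal to K
  have hperp : η j ∈ Kᗮ := by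
    rw [hη j]
    exact Submodule.sub_starProjection_mem_orthogonal (K := K) _
  have hinner0 : ∀ k, k ≠ j → inner ℝ (η j) (v k) = (0 : ℝ) := by
    intro k hk
    have hm : v k ∈ K := Submodule.subset_span ⟨k, hk, rfl⟩
    exact (Submodule.mem_orthogonal' K (η j)).mp hperp _ hm
  have hinner_self : inner ℝ (η j) (v j) = (‖η j‖ : ℝ) ^ 2 := by
    have hvj : v j = η j + (K.orthogonalProjectionOnto (v j) : EuclideanSpace ℝ (Fin p)) := by
      rw [hη j]; abel
    rw [hvj, inner_add_right]
    have h0 : inner ℝ (η j) ((K.orthogonalProjectionOnto (v j) : EuclideanSpace ℝ (Fin p))) = (0 : ℝ) :=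
      (Submodule.mem_orthogonal' K (η j)).mp hperp _ (K.orthogonalProjectionOnto (v j)).2
    rw [h0, real_inner_self_eq_norm_sq]
    ring
  -- linear independence of the rows
  have hli : LinearIndependent ℝ v := by
    have hliG : LinearIndependent ℝ (fun i => G i) :=
      Matrix.linearIndependent_rows_iff_isUnit.mpr ((Matrix.isUnit_iff_isUnit_det G).mpr hG)
    have hveq : v = fun i => (WithLp.linearEquiv 2 ℝ (Fin p → ℝ)).symm (G i) := by
      funext i; ext k; exact hv i k
    rw [hveq]
    exact hliG.map' (WithLp.linearEquiv 2 ℝ (Fin p → ℝ)).symm.toLinearMap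
      (LinearEquiv.ker _)
  have hηne : η j ≠ 0 := by
    intro h0
    have hvj : v j ∉ K := hli.notMem_span_image (by simp)
    apply hvj
    have h1 := hη j
    rw [h0, eq_comm, sub_eq_zero] at h1
    rw [h1]
    exact (K.orthogonalProjectionOnto (v j)).2
  have hηpos : (0 : ℝ) < ‖η j‖ := norm_pos_iff.mpr hηne
  -- the lattice vector before rotation
  set u : EuclideanSpace ℝ (Fin p) := WithLp.toLp 2 ((Gᵀ).mulVec (fun i => (f i : ℝ))) with hu
  have husum : u = ∑ k, (f k : ℝ) • v k := by
    ext i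
    simp only [hu, PiLp.toLp_apply, Matrix.mulVec, dotProduct, Matrix.transpose_apply]
    rw [WithLp.ofLp_sum, Finset.sum_apply]
    exact Finset.sum_congr rfl fun k _ => by
      simp [hv k i, mul_comm]
  -- inner product computation
  have hinneru : inner ℝ (η j) u = (f j : ℝ) * ‖η j‖ ^ 2 := by
    rw [husum, inner_sum]
    rw [Finset.sum_eq_single j]
    · rw [real_inner_smul_right, hinner_self]
    · intro k _ hk
      rw [real_inner_smul_right, hinner0 k hk, mul_zero]
    · intro h; exact absurd (Finset.mem_univ j) h
  -- lower bound on ‖u‖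
  have hlow : |(f j : ℝ)| * ‖η j‖ ≤ ‖u‖ := by
    have hcs := abs_real_inner_le_norm (η j) u
    rw [hinneru] at hcs
    rw [abs_mul, abs_of_nonneg (by positivity : (0:ℝ) ≤ ‖η j‖ ^ 2)] at hcs
    have : |(f j : ℝ)| * ‖η j‖ ^ 2 ≤ ‖η j‖ * ‖u‖ := hcs
    nlinarith [hηpos]
  -- the rotated vector
  set w : EuclideanSpace ℝ (Fin p) := WithLp.toLp 2 ((Rᵀ * Gᵀ).mulVec (fun i => (f i : ℝ))) with hw
  have hwu : ‖w‖ = ‖u‖ := by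
    have hRR : R * Rᵀ = 1 := mul_eq_one_comm.mp hR
    have hdot : dotProduct (w.ofLp : Fin p → ℝ) w.ofLp = dotProduct (u.ofLp : Fin p → ℝ) u.ofLp := by
      have hw2 : (w.ofLp : Fin p → ℝ) = Rᵀ.mulVec u.ofLp := by
        rw [hw, hu, ← Matrix.mulVec_mulVec]
      rw [hw2]
      rw [dotProduct_mulVec, Matrix.mulVec_transpose, Matrix.vecMul_vecMul]
      rw [show (u.ofLp : Fin p → ℝ) ᵥ* (R * Rᵀ) = u.ofLp by rw [hRR]; simp]
    have h1 : ‖w‖ ^ 2 = ‖u‖ ^ 2 := by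
      rw [← real_inner_self_eq_norm_sq, ← real_inner_self_eq_norm_sq, PiLp.inner_apply, PiLp.inner_apply]
      simpa only [RCLike.inner_apply, conj_trivial, dotProduct] using hdot
    rw [← Real.sqrt_sq (norm_nonneg w), ← Real.sqrt_sq (norm_nonneg u), h1]
  -- upper bound on ‖w + δ‖
  have hwd : ‖w + δ‖ ≤ Real.sqrt p * (l / 2) := by
    rw [EuclideanSpace.norm_eq]
    have hbound : ∀ k, ‖(w + δ) k‖ ^ 2 ≤ (l / 2) ^ 2 := by
      intro k
      have hk := hall k
      have h1 : |w k + δ k| ≤ l / 2 := abs_le.mpr ⟨hk.1, hk.2⟩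
      have : (w + δ) k = w k + δ k := rfl
      rw [this, Real.norm_eq_abs]
      nlinarith [abs_nonneg (w k + δ k)]
    calc Real.sqrt (∑ k, ‖(w + δ) k‖ ^ 2) ≤ Real.sqrt (∑ _k : Fin p, (l / 2) ^ 2) := by
          apply Real.sqrt_le_sqrt
          exact Finset.sum_le_sum fun k _ => hbound k
      _ = Real.sqrt p * (l / 2) := by
          rw [Finset.sum_const, Finset.card_univ, Fintype.card_fin, nsmul_eq_mul]
          rw [Real.sqrt_mul (by positivity)]
          congr 1
          exact Real.sqrt_sq (by positivity)
  -- combine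
  have hchain : |(f j : ℝ)| * ‖η j‖ ≤ Real.sqrt p * (l / 2) + ρ := by
    calc |(f j : ℝ)| * ‖η j‖ ≤ ‖u‖ := hlow
      _ = ‖w‖ := hwu.symm
      _ ≤ ‖w + δ‖ + ‖δ‖ := by
          have h3 : w = (w + δ) - δ := by abel
          calc ‖w‖ = ‖(w + δ) - δ‖ := by rw [← h3]
            _ ≤ ‖w + δ‖ + ‖δ‖ := norm_sub_le _ _
      _ ≤ Real.sqrt p * (l / 2) + ρ := add_le_add hwd hδ
  -- contradiction with hf
  have h2 : l * Real.sqrt p / (2 * ‖η j‖) + ρ / ‖η j‖ = (Real.sqrt p * (l / 2) + ρ) / ‖η j‖ := by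
    field_simp
  rw [h2] at hf
  rw [div_lt_iff₀ hηpos] at hf
  linarith
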